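/- Let p > 5 be a prime with p ≡ 7, 11, 13, or 14 (mod 15). Then the rational number ∑_{k=0}^{p-1} u_{k+1}(1,4)·H_k/2^k is congruent to 0 modulo p. -/

import Mathlib

/-- The Lucas sequence `u_n(A,B)`. -/
def lucasU (A B : ℤ) : ℕ → ℤ
  | 0 => 0
  | 1 => 1
  | n + 2 => A * lucasU A B (n + 1) - B * lucasU A B n

/-- `x ≡ y (mod p^m)` for rational numbers: `x - y = p^m * r` with `p ∤ den r`. -/
def ratCong (p m : ℕ) (x y : ℚ) : Prop :=
  ∃ r : ℚ, x - y = (p : ℚ) ^ m * r ∧ ¬ (p ∣ r.den)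

open Finset

/-- Cast of the Lucas sequence u(1,4) in terms of a root of x^2 = x - 4. -/
lemma lucas_cast {K : Type*} [CommRing K] (α : K) (hα : α ^ 2 = α - 4) :
    ∀ n : ℕ, (lucasU 1 4 n : K) * (2 * α - 1) = α ^ n - (1 - α) ^ n := by
  intro n
  induction n using Nat.twoStepInduction with
  | zero => simp [lucasU]
  | one => simp [lucasU]; ring
  | more n ih0 ih1 =>
    have hβ : (1 - α) ^ 2 = (1 - α) - 4 := by linear_combination hα
    show ((1 * lucasU 1 4 (n + 1) - 4 * lucasU 1 4 n : ℤ) : K) * _ = _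
    push_cast
    linear_combination ih1 - 4 * ih0 - α ^ n * hα + (1 - α) ^ n * hβ

/-- Triangle sum swap. -/
lemma tri_swap {M : Type*} [AddCommMonoid M] (f : ℕ → ℕ → M) :
    ∀ n : ℕ, ∑ k ∈ range n, ∑ j ∈ Icc 1 k, f j k
      = ∑ j ∈ Icc 1 n, ∑ k ∈ Ico j n, f j k := by
  intro n
  induction n with
  | zero => simp
  | succ n ih =>
    rw [Finset.sum_range_succ, ih, Finset.sum_Icc_succ_top (Nat.one_le_iff_ne_zero.2 (Nat.succ_ne_zero n)), Finset.Ico_self, Finset.sum_empty, add_zero]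
    rw [← Finset.sum_add_distrib]
    apply Finset.sum_congr rfl
    intro j hj
    rw [Finset.sum_Ico_succ_top (Finset.mem_Icc.mp hj).2]

/-- Reflection of a sum over Icc 1 n. -/
lemma sum_reflect {M : Type*} [AddCommMonoid M] (f : ℕ → M) (n : ℕ) :
    ∑ j ∈ Icc 1 n, f j = ∑ j ∈ Icc 1 n, f (n + 1 - j) := by
  rw [← Finset.Ico_add_one_right_eq_Icc, Finset.sum_Ico_eq_sum_range, Finset.sum_Ico_eq_sum_range,
    ← Finset.sum_range_reflect]
  apply Finset.sum_congr rfl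
  intro i hi
  congr 1
  simp only [Finset.mem_range] at hi
  omega

/-- Telescoping sum for the geometric-tail. -/
lemma telescope {K : Type*} [Field K] (h2 : (2:K) ≠ 0) (h3 : (3:K) ≠ 0)
    (x : K) (hx : x ^ 2 = x - 4) (j m : ℕ) :
    ∑ k ∈ Ico j (j + m), x ^ (k + 1) * ((2:K)⁻¹) ^ k
      = (2/3) * (x ^ j * (x - 2) * ((2:K)⁻¹) ^ j)
        - (2/3) * (x ^ (j + m) * (x - 2) * ((2:K)⁻¹) ^ (j + m)) := by
  have key : ∀ n : ℕ, x ^ (n + 1) * ((2:K)⁻¹) ^ n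
      = (2/3) * (x ^ n * (x - 2) * ((2:K)⁻¹) ^ n)
        - (2/3) * (x ^ (n + 1) * (x - 2) * ((2:K)⁻¹) ^ (n + 1)) := by
    intro n
    have h2e : (2:K) * (2:K)⁻¹ = 1 := mul_inv_cancel₀ h2
    have h3e : (3:K) * (3:K)⁻¹ = 1 := mul_inv_cancel₀ h3
    linear_combination ((1:K)/3) * x ^ n * ((2:K)⁻¹) ^ n * hx
      + ((1:K)/3) * x * x ^ n * (x - 2) * ((2:K)⁻¹) ^ n * h2e
      - x * x ^ n * ((2:K)⁻¹) ^ n * h3e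
  induction m with
  | zero => simp
  | succ m ih =>
    rw [show j + (m + 1) = (j + m) + 1 from rfl,
      Finset.sum_Ico_succ_top (Nat.le_add_right j m), ih, key (j + m)]
    ring


/-- The core congruence computation in a field of characteristic `p` containing a
"non-rational" root of `x^2 - x + 4`. -/
lemma core {K : Type*} [Field K] (p : ℕ) (hp : p.Prime) [CharP K p]
    (h2 : (2:K) ≠ 0) (h3 : (3:K) ≠ 0) (h15 : (15:K) ≠ 0)
    (α : K) (hα : α ^ 2 = α - 4) (hfr : α ^ p = 1 - α) :
    ∑ k ∈ range p, (lucasU 1 4 (k + 1) : K) * (∑ j ∈ Icc 1 k, (j : K)⁻¹) / 2 ^ k = 0 := by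
  haveI : Fact p.Prime := ⟨hp⟩
  have hp1 : 1 ≤ p := hp.one_lt.le
  have hd : (2 * α - 1) ≠ 0 := by
    intro h
    apply h15
    have hsq : (2 * α - 1) ^ 2 = -15 := by linear_combination 4 * hα
    rw [h] at hsq
    linear_combination hsq
  have hu := lucas_cast α hα
  have hprod : α * (1 - α) = 4 := by linear_combination -hα
  have hα0 : α ≠ 0 := by
    intro h; rw [h, zero_mul] at hprod
    have h4 : (2:K) * 2 = 0 := by linear_combination -hprod
    exact h2 (mul_self_eq_zero.mp h4)
  have hβ0 : (1 - α) ≠ 0 := by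
    intro h; rw [h, mul_zero] at hprod
    have h4 : (2:K) * 2 = 0 := by linear_combination -hprod
    exact h2 (mul_self_eq_zero.mp h4)
  have h2e : (2:K) * (2:K)⁻¹ = 1 := mul_inv_cancel₀ h2
  have he0 : (2:K)⁻¹ ≠ 0 := inv_ne_zero h2
  have hβfr : (1 - α) ^ p = α := by
    rw [sub_pow_char, one_pow, hfr]; ring
  have h2p : (2:K) ^ p = 2 := by
    have h := map_natCast (frobenius K p) 2
    rw [frobenius_def] at h
    simpa using h
  have hep : ((2:K)⁻¹) ^ p = (2:K)⁻¹ := by rw [inv_pow, h2p]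
  have hpK : ((p:ℕ) : K) = 0 := CharP.cast_eq_zero K p
  have hcast : ∀ j ∈ Icc 1 (p - 1), ((p - 1 + 1 - j : ℕ) : K) = -(j : K) := by
    intro j hj
    rw [Finset.mem_Icc] at hj
    have hj1 : p - 1 + 1 - j = p - j := by omega
    rw [hj1, Nat.cast_sub (by omega), hpK]
    ring
  -- the sum of inverses of 1..p-1 vanishes
  have hsum0 : ∑ j ∈ Icc 1 (p - 1), (j : K)⁻¹ = 0 := by
    have h := sum_reflect (fun j => ((j : K))⁻¹) (p - 1)
    have h' : ∑ j ∈ Icc 1 (p - 1), (((p - 1 + 1 - j : ℕ) : K))⁻¹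
        = ∑ j ∈ Icc 1 (p - 1), -((j : K))⁻¹ := by
      apply Finset.sum_congr rfl
      intro j hj
      rw [hcast j hj, inv_neg]
    rw [h'] at h
    rw [Finset.sum_neg_distrib] at h
    have h2' : (2:K) * (∑ j ∈ Icc 1 (p - 1), (j : K)⁻¹) = 0 := by linear_combination h
    rcases mul_eq_zero.mp h2' with hc | hc
    · exact absurd hc h2
    · exact hc
  -- the key reflection identity for L(α/2)
  have hae0 : α * (2:K)⁻¹ ≠ 0 := mul_ne_zero hα0 he0
  have haeprod : (α * (2:K)⁻¹) * ((1 - α) * (2:K)⁻¹) = 1 := by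
    linear_combination ((2:K)⁻¹)^2 * hprod + (1 + 2 * (2:K)⁻¹) * h2e
  have haep : (α * (2:K)⁻¹) ^ p = (1 - α) * (2:K)⁻¹ := by
    rw [mul_pow, hfr, hep]
  have hLrefl : ∑ j ∈ Icc 1 (p - 1), (α * (2:K)⁻¹) ^ j * (j : K)⁻¹
      = -(((1 - α) * (2:K)⁻¹) *
          ∑ j ∈ Icc 1 (p - 1), ((1 - α) * (2:K)⁻¹) ^ j * (j : K)⁻¹) := by
    rw [sum_reflect (fun j => (α * (2:K)⁻¹) ^ j * ((j : K))⁻¹) (p - 1)]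
    rw [Finset.mul_sum, ← Finset.sum_neg_distrib]
    apply Finset.sum_congr rfl
    intro j hj
    have hjj := Finset.mem_Icc.mp hj
    have hj1 : p - 1 + 1 - j = p - j := by omega
    rw [hj1]
    have hpow : (α * (2:K)⁻¹) ^ (p - j)
        = ((1 - α) * (2:K)⁻¹) * ((1 - α) * (2:K)⁻¹) ^ j := by
      apply mul_right_cancel₀ (pow_ne_zero j hae0)
      rw [← pow_add, Nat.sub_add_cancel (by omega : j ≤ p), haep]
      rw [mul_assoc, ← mul_pow, mul_comm ((1 - α) * (2:K)⁻¹) (α * (2:K)⁻¹), haeprod, one_pow,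
        mul_one]
    rw [hpow]
    have hc : ((p - j : ℕ) : K) = -(j : K) := by
      rw [Nat.cast_sub (by omega), hpK]; ring
    rw [hc, inv_neg]
    ring
  -- hence L(β/2) = -(α/2) L(α/2)
  have hLβ : ∑ j ∈ Icc 1 (p - 1), ((1 - α) * (2:K)⁻¹) ^ j * (j : K)⁻¹
      = -((α * (2:K)⁻¹) * ∑ j ∈ Icc 1 (p - 1), (α * (2:K)⁻¹) ^ j * (j : K)⁻¹) := by
    linear_combination (α * (2:K)⁻¹) * hLrefl
      - (∑ j ∈ Icc 1 (p - 1), ((1 - α) * (2:K)⁻¹) ^ j * (j : K)⁻¹) * haeprod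
  -- now the main computation
  suffices hS : (∑ k ∈ range p, (lucasU 1 4 (k + 1) : K) * (∑ j ∈ Icc 1 k, (j : K)⁻¹) / 2 ^ k)
      * (2 * α - 1) = 0 by
    exact (mul_eq_zero.mp hS).resolve_right hd
  rw [Finset.sum_mul]
  have hterm : ∀ k ∈ range p,
      (lucasU 1 4 (k + 1) : K) * (∑ j ∈ Icc 1 k, (j : K)⁻¹) / 2 ^ k * (2 * α - 1)
        = ∑ j ∈ Icc 1 k, (j : K)⁻¹ * ((α ^ (k+1) - (1 - α) ^ (k+1)) * ((2:K)⁻¹) ^ k) := by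
    intro k _
    have hk : (lucasU 1 4 (k + 1) : K) * (∑ j ∈ Icc 1 k, (j : K)⁻¹) / 2 ^ k * (2 * α - 1)
        = (∑ j ∈ Icc 1 k, (j : K)⁻¹) * ((α ^ (k+1) - (1 - α) ^ (k+1)) * ((2:K)⁻¹) ^ k) := by
      rw [div_eq_mul_inv, ← inv_pow, ← hu (k+1)]
      ring
    rw [hk, Finset.sum_mul]
  rw [Finset.sum_congr rfl hterm]
  rw [tri_swap (fun j k => (j : K)⁻¹ * ((α ^ (k+1) - (1 - α) ^ (k+1)) * ((2:K)⁻¹) ^ k)) p]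
  have hinner : ∀ j ∈ Icc 1 p,
      ∑ k ∈ Ico j p, (j : K)⁻¹ * ((α ^ (k+1) - (1 - α) ^ (k+1)) * ((2:K)⁻¹) ^ k)
        = (j : K)⁻¹ * ((2/3) * (α ^ j * (α - 2) * ((2:K)⁻¹) ^ j)
            - (2/3) * ((1 - α) ^ j * ((1 - α) - 2) * ((2:K)⁻¹) ^ j)
            - (2/3) * (2 * α - 1)) := by
    intro j hj
    have hjp : j ≤ p := (Finset.mem_Icc.mp hj).2
    rw [← Finset.mul_sum]
    congr 1
    have hsplit : ∑ k ∈ Ico j p, (α ^ (k+1) - (1 - α) ^ (k+1)) * ((2:K)⁻¹) ^ k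
        = (∑ k ∈ Ico j p, α ^ (k+1) * ((2:K)⁻¹) ^ k)
          - ∑ k ∈ Ico j p, (1 - α) ^ (k+1) * ((2:K)⁻¹) ^ k := by
      rw [← Finset.sum_sub_distrib]
      apply Finset.sum_congr rfl
      intros; ring
    rw [hsplit]
    have hβα : (1 - α) ^ 2 = (1 - α) - 4 := by linear_combination hα
    rw [show Ico j p = Ico j (j + (p - j)) by rw [Nat.add_sub_cancel' hjp]]
    rw [telescope h2 h3 α hα j (p - j), telescope h2 h3 (1 - α) hβα j (p - j),
      Nat.add_sub_cancel' hjp]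
    rw [hfr, hβfr, hep]
    linear_combination ((2 - 4 * α)/3 : K) * h2e
  rw [Finset.sum_congr rfl hinner]
  have hIccsplit : ∀ F : ℕ → K, ∑ j ∈ Icc 1 p, F j = (∑ j ∈ Icc 1 (p - 1), F j) + F p := by
    intro F
    conv_lhs => rw [show p = p - 1 + 1 by omega]
    rw [Finset.sum_Icc_succ_top (by omega : 1 ≤ p - 1 + 1)]
    rw [show p - 1 + 1 = p by omega]
  rw [hIccsplit]
  rw [hpK, inv_zero, zero_mul, add_zero]
  have hW : ∀ j ∈ Icc 1 (p - 1),
      (j : K)⁻¹ * ((2/3) * (α ^ j * (α - 2) * ((2:K)⁻¹) ^ j)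
            - (2/3) * ((1 - α) ^ j * ((1 - α) - 2) * ((2:K)⁻¹) ^ j)
            - (2/3) * (2 * α - 1))
        = (2/3) * (α - 2) * ((α * (2:K)⁻¹) ^ j * (j : K)⁻¹)
            - (2/3) * ((1 - α) - 2) * (((1 - α) * (2:K)⁻¹) ^ j * (j : K)⁻¹)
            - (2/3) * (2 * α - 1) * (j : K)⁻¹ := by
    intro j _
    rw [mul_pow, mul_pow]
    ring
  rw [Finset.sum_congr rfl hW, Finset.sum_sub_distrib, Finset.sum_sub_distrib,
    ← Finset.mul_sum, ← Finset.mul_sum, ← Finset.mul_sum, hsum0, mul_zero, hLβ]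
  have hbr : (α - 2) + ((1 - α) - 2) * (α * (2:K)⁻¹) = 0 := by
    linear_combination (-(2:K)⁻¹) * hα + (2 - α) * h2e
  linear_combination ((2:K)/3) * (∑ j ∈ Icc 1 (p - 1), (α * (2:K)⁻¹) ^ j * (j : K)⁻¹) * hbr

/-- `-15` is a non-square mod `p` when `p % 15 ∈ {7, 11, 13, 14}`. -/
lemma ns15 (p : ℕ) (hp : p.Prime) (hp5 : 5 < p)
    (h15 : p % 15 = 7 ∨ p % 15 = 11 ∨ p % 15 = 13 ∨ p % 15 = 14) :
    ¬ IsSquare ((-15 : ℤ) : ZMod p) := by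
  haveI : Fact p.Prime := ⟨hp⟩
  apply ZMod.nonsquare_of_jacobiSym_eq_neg_one
  have hodd : Odd p := hp.odd_of_ne_two (by omega)
  have h1 : jacobiSym (-15) p = jacobiSym (-1) p * jacobiSym 15 p := by
    rw [← jacobiSym.mul_left]; norm_num
  have h2 : jacobiSym (-1) p = (-1 : ℤ) ^ (p / 2) := by
    rw [jacobiSym.at_neg_one hodd]
    exact_mod_cast ZMod.χ₄_eq_neg_one_pow (Nat.odd_iff.mp hodd)
  have h3 : jacobiSym ((15 : ℕ) : ℤ) p = (-1 : ℤ) ^ (p / 2) * jacobiSym p 15 := by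
    rw [jacobiSym.quadratic_reciprocity (by decide) hodd]
    norm_num [pow_mul]
  have h4 : jacobiSym (p : ℤ) 15 = -1 := by
    rw [jacobiSym.mod_left]
    have hc : ((p : ℤ) % ((15 : ℕ) : ℤ)) = ((p % 15 : ℕ) : ℤ) := by push_cast; rfl
    rw [hc]
    rcases h15 with h | h | h | h <;> rw [h] <;> norm_num
  have hsq : ((-1 : ℤ)) ^ (p / 2) * ((-1 : ℤ)) ^ (p / 2) = 1 := by
    rw [← pow_add]
    exact Even.neg_one_pow ⟨p / 2, rfl⟩
  have h3' : jacobiSym (15 : ℤ) p = (-1 : ℤ) ^ (p / 2) * jacobiSym p 15 := by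
    exact_mod_cast h3
  rw [h1, h2, h3', h4, ← mul_assoc, hsq, one_mul]

/-- Construction of the quadratic extension containing a root of `x^2 - x + 4`. -/
lemma exists_field (p : ℕ) (hp : p.Prime) (hp2 : p ≠ 2) (hp3 : p ≠ 3) (hp5 : p ≠ 5)
    (hns : ¬ IsSquare ((-15 : ℤ) : ZMod p)) :
    ∃ (K : Type) (_ : Field K) (_ : CharP K p) (α : K),
      (2:K) ≠ 0 ∧ (3:K) ≠ 0 ∧ (15:K) ≠ 0 ∧ α ^ 2 = α - 4 ∧ α ^ p = 1 - α := by
  haveI : Fact p.Prime := ⟨hp⟩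
  set q : Polynomial (ZMod p) := Polynomial.X ^ 2 - Polynomial.X + Polynomial.C 4 with hq
  have hqd : q.natDegree = 2 := by
    rw [hq]
    compute_degree!
  have hq0 : q ≠ 0 := fun h => by rw [h] at hqd; simp at hqd
  have hqroots : q.roots = 0 := by
    rw [Multiset.eq_zero_iff_forall_notMem]
    intro z hz
    rw [Polynomial.mem_roots hq0] at hz
    have hz' : z ^ 2 - z + 4 = 0 := by
      simpa [hq] using hz
    apply hns
    refine ⟨2 * z - 1, ?_⟩
    push_cast
    linear_combination -4 * hz'
  have hirr : Irreducible q :=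
    (Polynomial.irreducible_iff_roots_eq_zero_of_degree_le_three (by omega) (by omega)).mpr hqroots
  haveI : Fact (Irreducible q) := ⟨hirr⟩
  letI K := AdjoinRoot q
  haveI hCharP : CharP K p := charP_of_injective_algebraMap (algebraMap (ZMod p) K).injective p
  set α : K := AdjoinRoot.root q with hαdef
  have hα0 : α ^ 2 - α + 4 = 0 := by
    have h : (Polynomial.aeval α) q = 0 := by
      rw [AdjoinRoot.aeval_eq, AdjoinRoot.mk_self]
    simpa [hq, map_ofNat] using h
  have hα : α ^ 2 = α - 4 := by linear_combination hα0
  have hnat : ∀ n : ℕ, ¬ (p ∣ n) → ((n : ℕ) : K) ≠ 0 := by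
    intro n hn h0
    exact hn ((CharP.cast_eq_zero_iff K p n).mp h0)
  have hdvd15 : ¬ (p ∣ 15) := by
    intro h
    have h' : p ∣ 3 * 5 := (by norm_num : (15:ℕ) = 3 * 5) ▸ h
    rcases (Nat.Prime.dvd_mul hp).mp h' with h'' | h''
    · exact hp3 ((Nat.prime_dvd_prime_iff_eq hp (by norm_num)).mp h'')
    · exact hp5 ((Nat.prime_dvd_prime_iff_eq hp (by norm_num)).mp h'')
  have h2K : (2:K) ≠ 0 := by
    have := hnat 2 (fun h => hp2 ((Nat.prime_dvd_prime_iff_eq hp (by norm_num)).mp h))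
    simpa using this
  have h3K : (3:K) ≠ 0 := by
    have := hnat 3 (fun h => hp3 ((Nat.prime_dvd_prime_iff_eq hp (by norm_num)).mp h))
    simpa using this
  have h15K : (15:K) ≠ 0 := by
    have := hnat 15 hdvd15
    simpa using this
  have h4p : (4:K) ^ p = 4 := by
    have h := map_natCast (frobenius K p) 4
    rw [frobenius_def] at h
    simpa using h
  have h2p : (2:K) ^ p = 2 := by
    have h := map_natCast (frobenius K p) 2
    rw [frobenius_def] at h
    simpa using h
  have hprodK : α * (1 - α) = 4 := by linear_combination -hα
  have hsq : (α ^ p) ^ 2 = α ^ p - 4 := by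
    have hcomm : (α ^ p) ^ 2 = (α ^ 2) ^ p := by
      rw [← pow_mul, ← pow_mul, mul_comm]
    rw [hcomm, hα, sub_pow_char, h4p]
  have hkey : (α ^ p - α) * (α ^ p - (1 - α)) = 0 := by
    linear_combination hsq + hprodK
  rcases mul_eq_zero.mp hkey with h | h
  · exfalso
    have hαp : α ^ p = α := by linear_combination h
    have hd2 : (2 * α - 1) ^ 2 = -15 := by linear_combination 4 * hα
    have hdK : (2 * α - 1) ≠ 0 := by
      intro hd0
      apply h15K
      rw [hd0] at hd2
      linear_combination hd2
    have hdp : (2 * α - 1) ^ p = 2 * α - 1 := by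
      rw [sub_pow_char, mul_pow, h2p, hαp, one_pow]
    have hpow : ((-15 : K)) ^ (p / 2) = 1 := by
      have hodd : p % 2 = 1 := Nat.Prime.eq_two_or_odd hp |>.resolve_left hp2
      have h1 : (2 * α - 1) ^ p = ((2 * α - 1) ^ 2) ^ (p / 2) * (2 * α - 1) := by
        rw [← pow_mul, ← pow_succ]
        congr 1
        omega
      rw [hdp, hd2] at h1
      have h2' : ((-15 : K)) ^ (p / 2) * (2 * α - 1) = 1 * (2 * α - 1) := by
        rw [one_mul, ← h1]
      exact mul_right_cancel₀ hdK h2'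
    have hzmod : (((-15 : ℤ) : ZMod p)) ^ (p / 2) = 1 := by
      apply (algebraMap (ZMod p) K).injective
      rw [map_pow, map_one, map_intCast]
      have : (((-15 : ℤ)) : K) = (-15 : K) := by push_cast; ring
      rw [this, hpow]
    have hne : ((-15 : ℤ) : ZMod p) ≠ 0 := by
      intro h0
      rw [ZMod.intCast_zmod_eq_zero_iff_dvd] at h0
      have : (p : ℤ) ∣ 15 := (dvd_neg.mp h0)
      have hq15 : p ∣ 15 := by exact_mod_cast this
      exact hdvd15 hq15
    exact hns ((ZMod.euler_criterion p hne).mpr hzmod)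
  · refine ⟨K, inferInstance, hCharP, α, h2K, h3K, h15K, hα, by linear_combination h⟩

lemma harmonic_num (k : ℕ) : ∃ c : ℤ, harmonic k * ((Nat.factorial k) : ℚ) = (c : ℚ) := by
  induction k with
  | zero => exact ⟨0, by simp⟩
  | succ k ih =>
    obtain ⟨c, hc⟩ := ih
    refine ⟨c * (k + 1) + (Nat.factorial k), ?_⟩
    rw [harmonic_succ]
    have hk : ((k : ℚ) + 1) ≠ 0 := by positivity
    push_cast [Nat.factorial_succ]
    field_simp
    linear_combination ((k : ℚ) + 1) * hc

lemma harmonic_den_dvd (k : ℕ) : ((harmonic k).den : ℤ) ∣ ((Nat.factorial k) : ℤ) := by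
  obtain ⟨c, hc⟩ := harmonic_num k
  have hk0 : (((Nat.factorial k) : ℕ) : ℚ) ≠ 0 := by positivity
  have hrepr : harmonic k = (c : ℚ) / (((Nat.factorial k) : ℤ) : ℚ) := by
    rw [eq_div_iff (by exact_mod_cast hk0)]
    exact_mod_cast hc
  rw [hrepr, ← Rat.divInt_eq_div]
  exact Rat.den_dvd c ((Nat.factorial k) : ℤ)

lemma harmonic_cast {K : Type*} [Field K] {p : ℕ} (hp : p.Prime) [CharP K p] :
    ∀ k, k < p → ((harmonic k : ℚ) : K) = ∑ j ∈ Icc 1 k, (j : K)⁻¹ := by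
  intro k
  induction k with
  | zero => simp
  | succ k ih =>
    intro hk
    have hk' : k < p := lt_trans (Nat.lt_succ_self k) hk
    have hfactden : ¬ (p ∣ (harmonic k).den) := by
      intro h0
      have hd := harmonic_den_dvd k
      have h1 : (p : ℤ) ∣ ((Nat.factorial k) : ℤ) := dvd_trans (Int.natCast_dvd_natCast.mpr h0) hd
      have h2 : p ∣ (Nat.factorial k) := by exact_mod_cast h1
      have := (Nat.Prime.dvd_factorial hp).mp h2
      omega
    have hden : (((harmonic k).den : ℕ) : K) ≠ 0 := by
      intro h0
      exact hfactden ((CharP.cast_eq_zero_iff K p _).mp h0)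
    have hdvd : (((((k + 1 : ℕ) : ℚ))⁻¹).den : ℤ) ∣ ((k + 1 : ℕ) : ℤ) := by
      have hrepr : (((k + 1 : ℕ) : ℚ))⁻¹ = Rat.divInt (1 : ℤ) ((k + 1 : ℕ) : ℤ) := by
        rw [Rat.divInt_eq_div]
        push_cast
        ring
      rw [hrepr]
      exact Rat.den_dvd 1 _
    have hsuccden : ¬ (p ∣ ((((k + 1 : ℕ) : ℚ))⁻¹).den) := by
      intro h0
      have h2 : (p : ℤ) ∣ ((k + 1 : ℕ) : ℤ) := dvd_trans (Int.natCast_dvd_natCast.mpr h0) hdvd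
      have h3 : p ∣ (k + 1) := by exact_mod_cast h2
      have := Nat.le_of_dvd (by omega) h3
      omega
    have hden2 : ((((((k + 1 : ℕ) : ℚ))⁻¹).den : ℕ) : K) ≠ 0 := fun h0 =>
      hsuccden ((CharP.cast_eq_zero_iff K p _).mp h0)
    have hnum : ((((k + 1 : ℕ) : ℚ)).num : K) ≠ 0 := by
      rw [Rat.num_natCast]
      intro h0
      have h2 : ((k + 1 : ℕ) : K) = 0 := by exact_mod_cast h0
      have h3 := (CharP.cast_eq_zero_iff K p _).mp h2
      have := Nat.le_of_dvd (by omega) h3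
      omega
    have hcastinv : (((((k + 1 : ℕ) : ℚ))⁻¹ : ℚ) : K) = ((k + 1 : ℕ) : K)⁻¹ := by
      rw [Rat.cast_inv_of_ne_zero hnum, Rat.cast_natCast]
    rw [show harmonic (k + 1) = harmonic k + (((k + 1 : ℕ) : ℚ))⁻¹ from harmonic_succ k]
    rw [Rat.cast_add_of_ne_zero hden hden2, ih hk', hcastinv,
      Finset.sum_Icc_succ_top (by omega : 1 ≤ k + 1)]

theorem stmt13 (p : ℕ) (hp : p.Prime) (hp5 : 5 < p)
    (h15 : p % 15 = 7 ∨ p % 15 = 11 ∨ p % 15 = 13 ∨ p % 15 = 14) :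
    ratCong p 1
      (∑ k ∈ Finset.range p, (lucasU 1 4 (k + 1) : ℚ) * harmonic k / 2 ^ k) 0 := by
  haveI : Fact p.Prime := ⟨hp⟩
  have hp2 : p ≠ 2 := by omega
  have hp3 : p ≠ 3 := by omega
  have hp5' : p ≠ 5 := by omega
  have hns := ns15 p hp hp5 h15
  obtain ⟨K, hF, hC, α, h2K, h3K, h15K, hα, hfr⟩ := exists_field p hp hp2 hp3 hp5' hns
  have hcore := core p hp h2K h3K h15K α hα hfr
  -- integer data
  choose c hc using harmonic_num
  set t : ℕ → ℕ := fun k => Nat.factorial (p - 1) / Nat.factorial k with ht_def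
  have ht : ∀ k, k ≤ p - 1 → Nat.factorial k * t k = Nat.factorial (p - 1) := by
    intro k hk
    exact Nat.mul_div_cancel' (Nat.factorial_dvd_factorial hk)
  set a : ℤ := ∑ k ∈ Finset.range p,
    lucasU 1 4 (k + 1) * c k * (t k : ℤ) * 2 ^ (p - 1 - k) with ha_def
  set B : ℕ := Nat.factorial (p - 1) * 2 ^ (p - 1) with hB_def
  have hBQ : ((B : ℕ) : ℚ) ≠ 0 := by positivity
  -- the sum equals a / B
  have hSB : (∑ k ∈ Finset.range p, (lucasU 1 4 (k + 1) : ℚ) * harmonic k / 2 ^ k)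
      = (a : ℚ) / (B : ℚ) := by
    rw [eq_div_iff hBQ, Finset.sum_mul, ha_def]
    push_cast
    apply Finset.sum_congr rfl
    intro k hk
    rw [Finset.mem_range] at hk
    have hk' : k ≤ p - 1 := by omega
    have h2pow : (2 : ℚ) ^ (p - 1) = 2 ^ k * 2 ^ (p - 1 - k) := by
      rw [← pow_add]
      congr 1
      omega
    have hfac : ((Nat.factorial (p - 1) : ℕ) : ℚ)
        = ((Nat.factorial k : ℕ) : ℚ) * ((t k : ℕ) : ℚ) := by
      exact_mod_cast congrArg (Nat.cast : ℕ → ℚ) (ht k hk').symm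
    have h2k : (2 : ℚ) ^ k ≠ 0 := by positivity
    rw [hB_def]
    push_cast
    rw [hfac, h2pow]
    field_simp
    linear_combination (lucasU 1 4 (k + 1) : ℚ) * ((t k : ℕ) : ℚ) * hc k
  -- the value of a in K is zero
  have haK : ((a : ℤ) : K) = 0 := by
    rw [ha_def]
    push_cast
    have hterm : ∀ k ∈ Finset.range p,
        (lucasU 1 4 (k + 1) : K) * (c k : K) * (t k : K) * (2 : K) ^ (p - 1 - k)
          = ((Nat.factorial (p - 1) : ℕ) : K) * (2 : K) ^ (p - 1)
            * ((lucasU 1 4 (k + 1) : K) * (∑ j ∈ Finset.Icc 1 k, (j : K)⁻¹) / 2 ^ k) := by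
      intro k hk
      rw [Finset.mem_range] at hk
      have hk' : k ≤ p - 1 := by omega
      have hcK : ((c k : ℤ) : K) = (∑ j ∈ Finset.Icc 1 k, (j : K)⁻¹)
          * ((Nat.factorial k : ℕ) : K) := by
        have hcast := congrArg (fun q : ℚ => (q : K)) (hc k)
        have hdenK : (((harmonic k).den : ℕ) : K) ≠ 0 := by
          intro h0
          have h1 := (CharP.cast_eq_zero_iff K p _).mp h0
          have hd := harmonic_den_dvd k
          have h2 : (p : ℤ) ∣ ((Nat.factorial k) : ℤ) :=
            dvd_trans (Int.natCast_dvd_natCast.mpr h1) hd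
          have h3 : p ∣ Nat.factorial k := by exact_mod_cast h2
          have := (Nat.Prime.dvd_factorial hp).mp h3
          omega
        have hdenN : ((((Nat.factorial k : ℕ) : ℚ)).den : K) ≠ 0 := by
          rw [Rat.den_natCast]
          simp
        rw [Rat.cast_mul_of_ne_zero hdenK hdenN, Rat.cast_intCast,
          harmonic_cast hp k hk, Rat.cast_natCast] at hcast
        exact hcast.symm
      rw [hcK]
      have hfacK : ((Nat.factorial k : ℕ) : K) * ((t k : ℕ) : K)
          = ((Nat.factorial (p - 1) : ℕ) : K) := by
        exact_mod_cast congrArg (Nat.cast : ℕ → K) (ht k hk')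
      have h2powK : (2 : K) ^ (p - 1) = 2 ^ k * 2 ^ (p - 1 - k) := by
        rw [← pow_add]
        congr 1
        omega
      have h2kK : (2 : K) ^ k ≠ 0 := pow_ne_zero _ h2K
      rw [← hfacK, h2powK]
      field_simp
    rw [Finset.sum_congr rfl hterm, ← Finset.mul_sum, hcore, mul_zero]
  -- hence p divides a
  have hpa : (p : ℤ) ∣ a := by
    have h0 : ((a : ℤ) : ZMod p) = 0 := by
      apply (ZMod.castHom (dvd_refl p) K).injective
      rw [map_intCast, map_zero]
      exact haK
    exact_mod_cast (ZMod.intCast_zmod_eq_zero_iff_dvd a p).mp h0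
  obtain ⟨a', ha'⟩ := hpa
  refine ⟨(a' : ℚ) / (B : ℚ), ?_, ?_⟩
  · rw [sub_zero, hSB, ha']
    push_cast
    ring
  · intro hdvd
    have hden : ((((a' : ℚ) / ((B : ℕ) : ℚ)).den : ℕ) : ℤ) ∣ ((B : ℕ) : ℤ) := by
      have hrepr : ((a' : ℚ) / ((B : ℕ) : ℚ)) = Rat.divInt a' ((B : ℕ) : ℤ) := by
        rw [Rat.divInt_eq_div]
        push_cast
        ring
      rw [hrepr]
      exact Rat.den_dvd _ _
    have h1 : (p : ℤ) ∣ ((B : ℕ) : ℤ) := dvd_trans (Int.natCast_dvd_natCast.mpr hdvd) hden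
    have hpB : p ∣ B := by exact_mod_cast h1
    rw [hB_def] at hpB
    rcases (Nat.Prime.dvd_mul hp).mp hpB with h | h
    · have := (Nat.Prime.dvd_factorial hp).mp h
      omega
    · have h2 := Nat.Prime.dvd_of_dvd_pow hp h
      have := Nat.le_of_dvd (by norm_num) h2
      omega
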